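/- For every n ∈ ℕ, c_n(1) = (1/n!) · Σ_{k=0}^{n} 2^{2k}·((2n)!/((2n−2k)!))·π^{2(n−k)}·|E_{2(n−k)}|. -/

import Mathlib

open MeasureTheory Real

/-- `c_n(ρ) = (1/(2π·n!)) ∫ ln(1+ρ·e^z)·z^{2n}·e^{−z/2} dz`. -/
noncomputable def cCoef (n : ℕ) (ρ : ℝ) : ℝ :=
  (1 / (2 * Real.pi * n.factorial)) *
    ∫ z : ℝ, Real.log (1 + ρ * Real.exp z) * z ^ (2 * n) * Real.exp (-z / 2)

/-- `|E_{2j}|`, the absolute value of the Euler numbers, characterized by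
`∫ u^{2j}/cosh(u) du = 2·(π/2)^{2j+1}·|E_{2j}|`. -/
noncomputable def absEuler (j : ℕ) : ℝ :=
  (∫ u : ℝ, u ^ (2 * j) / Real.cosh u) / (2 * (Real.pi / 2) ^ (2 * j + 1))

open Filter

namespace Stmt8Aux

lemma evenInt (f : ℝ → ℝ) (hO : IntegrableOn f (Set.Ioi 0)) (hf : ∀ x, f (-x) = f x) :
    Integrable f := by
  have A : MeasurableEmbedding fun x : ℝ => -x := (Homeomorph.neg ℝ).measurableEmbedding
  have h2 : IntegrableOn f (Set.Iic 0) ((volume : Measure ℝ).map fun x => -x) := by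
    rw [A.integrableOn_map_iff]
    have hpre : (fun x : ℝ => -x) ⁻¹' Set.Iic 0 = Set.Ici 0 := by ext x; simp
    rw [hpre]
    exact (Iff.mpr integrableOn_Ici_iff_integrableOn_Ioi hO).congr_fun
      (fun x _ => (hf x).symm) measurableSet_Ici
  rw [Measure.map_neg_eq_self (volume : Measure ℝ)] at h2
  have := h2.union hO
  rwa [Set.Iic_union_Ioi, integrableOn_univ] at this

lemma intAbs (m : ℕ) : Integrable (fun z : ℝ => |z| ^ m * Real.exp (-|z| / 2)) := by
  refine evenInt _ ?_ (fun x => by rw [abs_neg])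
  have := integrableOn_rpow_mul_exp_neg_mul_rpow (p := 1) (s := m) (b := 1/2)
    (lt_of_lt_of_le neg_one_lt_zero m.cast_nonneg) zero_lt_one (by norm_num)
  refine this.congr_fun (fun x hx => ?_) measurableSet_Ioi
  rw [Set.mem_Ioi] at hx
  beta_reduce
  rw [abs_of_pos hx, Real.rpow_natCast, Real.rpow_one]
  ring_nf

lemma contL : Continuous fun z : ℝ => Real.log (1 + Real.exp z) :=
  (continuous_const.add Real.continuous_exp).log
    (fun x => (by positivity : (0:ℝ) < 1 + Real.exp x).ne')

lemma logNonneg (z : ℝ) : 0 ≤ Real.log (1 + Real.exp z) :=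
  Real.log_nonneg (by nlinarith [Real.exp_pos z])

lemma logLeTop {z : ℝ} (hz : 0 ≤ z) : Real.log (1 + Real.exp z) ≤ z + 1 := by
  have h2 : (1 : ℝ) + Real.exp z ≤ 2 * Real.exp z := by nlinarith [Real.one_le_exp hz]
  calc Real.log (1 + Real.exp z) ≤ Real.log (2 * Real.exp z) :=
        Real.log_le_log (by positivity) h2
    _ = Real.log 2 + z := by rw [Real.log_mul two_ne_zero (Real.exp_ne_zero _), Real.log_exp]
    _ ≤ z + 1 := by
        have := Real.log_le_sub_one_of_pos (x := (2:ℝ)) (by norm_num)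
        nlinarith

lemma logLeExp (z : ℝ) : Real.log (1 + Real.exp z) ≤ Real.exp z := by
  have := Real.log_le_sub_one_of_pos (x := 1 + Real.exp z) (by positivity)
  simpa using this

lemma boundL (z : ℝ) : Real.log (1 + Real.exp z) * Real.exp (-z / 2) ≤
    (|z| + 1) * Real.exp (-|z| / 2) := by
  rcases le_or_gt z 0 with hz | hz
  · have h1 := logLeExp z
    have habs : |z| = -z := abs_of_nonpos hz
    calc Real.log (1 + Real.exp z) * Real.exp (-z / 2)
        ≤ Real.exp z * Real.exp (-z / 2) :=
          mul_le_mul_of_nonneg_right h1 (Real.exp_pos _).le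
      _ = Real.exp (-|z| / 2) := by rw [← Real.exp_add, habs]; ring_nf
      _ ≤ (|z| + 1) * Real.exp (-|z| / 2) := by
          nlinarith [abs_nonneg z, Real.exp_pos (-|z| / 2)]
  · rw [abs_of_pos hz]
    exact mul_le_mul_of_nonneg_right (logLeTop hz.le) (Real.exp_pos _).le

lemma intF (m : ℕ) :
    Integrable (fun z : ℝ => Real.log (1 + Real.exp z) * z ^ m * Real.exp (-z / 2)) := by
  have hg : Integrable (fun z : ℝ =>
      |z| ^ (m+1) * Real.exp (-|z| / 2) + |z| ^ m * Real.exp (-|z| / 2)) :=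
    (intAbs (m+1)).add (intAbs m)
  refine hg.mono' ?_ ?_
  · exact ((contL.mul (continuous_pow m)).mul
      ((Real.continuous_exp.comp (continuous_id.neg.div_const 2)))).aestronglyMeasurable
  · filter_upwards with z
    have h0 := logNonneg z
    have h1 : |Real.log (1 + Real.exp z) * z ^ m * Real.exp (-z / 2)|
        = (Real.log (1 + Real.exp z) * Real.exp (-z / 2)) * |z| ^ m := by
      rw [abs_mul, abs_mul, abs_of_nonneg h0, abs_of_nonneg (Real.exp_pos _).le, abs_pow]
      ring
    rw [Real.norm_eq_abs, h1]
    calc (Real.log (1 + Real.exp z) * Real.exp (-z / 2)) * |z| ^ m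
        ≤ ((|z| + 1) * Real.exp (-|z| / 2)) * |z| ^ m :=
          mul_le_mul_of_nonneg_right (boundL z) (pow_nonneg (abs_nonneg z) m)
      _ = |z| ^ (m+1) * Real.exp (-|z| / 2) + |z| ^ m * Real.exp (-|z| / 2) := by ring

lemma coshBound (m : ℕ) (z : ℝ) :
    |z ^ m / Real.cosh (z / 2)| ≤ 2 * (|z| ^ m * Real.exp (-|z| / 2)) := by
  have h1 : Real.exp (|z| / 2) / 2 ≤ Real.cosh (z / 2) := by
    rcases le_or_gt z 0 with hz | hz
    · rw [abs_of_nonpos hz, Real.cosh_eq]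
      have : -z / 2 = -(z/2) := by ring
      rw [this]
      nlinarith [Real.exp_pos (z/2)]
    · rw [abs_of_pos hz, Real.cosh_eq]
      nlinarith [Real.exp_pos (-(z/2))]
  have hc : 0 < Real.cosh (z / 2) := Real.cosh_pos _
  rw [abs_div, abs_pow, abs_of_pos hc, div_le_iff₀ hc]
  have h2 : Real.exp (-|z|/2) * Real.exp (|z|/2) = 1 := by
    rw [← Real.exp_add]
    have : -|z|/2 + |z|/2 = 0 := by ring
    rw [this, Real.exp_zero]
  nlinarith [pow_nonneg (abs_nonneg z) m, Real.exp_pos (-|z|/2), Real.exp_pos (|z|/2),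
    mul_le_mul_of_nonneg_left h1 (mul_nonneg (pow_nonneg (abs_nonneg z) m)
      (Real.exp_pos (-|z|/2)).le)]

lemma intG (m : ℕ) : Integrable (fun z : ℝ => z ^ m / Real.cosh (z / 2)) := by
  refine ((intAbs m).const_mul 2).mono' ?_ ?_
  · exact ((continuous_pow m).div (Real.continuous_cosh.comp (continuous_id.div_const 2))
      (fun x => (Real.cosh_pos _).ne')).aestronglyMeasurable
  · filter_upwards with z
    rw [Real.norm_eq_abs]
    exact coshBound m z

lemma derivStep (m : ℕ) (z : ℝ) :
    HasDerivAt (fun z : ℝ => -2 * (Real.exp (-z / 2) * (Real.log (1 + Real.exp z) * z ^ m)))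
      (Real.log (1 + Real.exp z) * z ^ m * Real.exp (-z / 2) - z ^ m / Real.cosh (z / 2)
        - 2 * m * (Real.log (1 + Real.exp z) * z ^ (m - 1) * Real.exp (-z / 2))) z := by
  have h1 : HasDerivAt (fun z : ℝ => Real.exp (-z / 2)) (Real.exp (-z / 2) * (-1/2)) z := by
    have : HasDerivAt (fun z : ℝ => -z / 2) (-1/2) z := by
      simpa using ((hasDerivAt_id z).neg.div_const 2)
    exact this.exp
  have h2 : HasDerivAt (fun z : ℝ => Real.log (1 + Real.exp z))
      (Real.exp z / (1 + Real.exp z)) z := by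
    have hne : 1 + Real.exp z ≠ 0 := by positivity
    have := ((hasDerivAt_const z (1:ℝ)).add (Real.hasDerivAt_exp z)).log hne
    simpa using this
  have h3 : HasDerivAt (fun z : ℝ => z ^ m) (m * z ^ (m - 1)) z := hasDerivAt_pow m z
  have h4 := ((h1.mul (h2.mul h3)).const_mul (-2 : ℝ))
  refine HasDerivAt.congr_deriv h4 ?_
  have hcosh : z ^ m / Real.cosh (z / 2)
      = 2 * (Real.exp (-z / 2) * (Real.exp z / (1 + Real.exp z) * z ^ m)) := by
    rw [Real.cosh_eq]
    have ha : Real.exp z = Real.exp (z / 2) * Real.exp (z / 2) := by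
      rw [← Real.exp_add]; ring_nf
    have hb : Real.exp (-z / 2) * Real.exp (z / 2) = 1 := by
      rw [← Real.exp_add]
      have : -z/2 + z/2 = 0 := by ring
      rw [this, Real.exp_zero]
    have hc : Real.exp (-(z / 2)) = Real.exp (-z / 2) := by ring_nf
    have hd : (0:ℝ) < Real.exp (z/2) := Real.exp_pos _
    have he : (0:ℝ) < Real.exp (-z/2) := Real.exp_pos _
    have hf : (0:ℝ) < 1 + Real.exp z := by positivity
    rw [hc, ha]
    have hb' : Real.exp (-z/2) = (Real.exp (z/2))⁻¹ := eq_inv_of_mul_eq_one_left hb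
    rw [hb']
    field_simp
    ring
  rw [hcosh]
  simp only [Pi.mul_apply]
  ring

lemma powExpTendsto (m : ℕ) :
    Tendsto (fun u : ℝ => u ^ m * Real.exp (-u / 2)) atTop (nhds 0) := by
  have t1 := tendsto_rpow_mul_exp_neg_mul_atTop_nhds_zero m (1/2) (by norm_num)
  refine t1.congr' ?_
  filter_upwards [eventually_ge_atTop (0:ℝ)] with z hz
  rw [Real.rpow_natCast]
  ring_nf

lemma tendstoTop (m : ℕ) :
    Tendsto (fun z : ℝ => -2 * (Real.exp (-z / 2) * (Real.log (1 + Real.exp z) * z ^ m)))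
      atTop (nhds 0) := by
  have hg : Tendsto (fun z : ℝ => 4 * (z ^ (m+1) * Real.exp (-z / 2))) atTop (nhds 0) := by
    simpa using (powExpTendsto (m+1)).const_mul (4:ℝ)
  refine squeeze_zero_norm' ?_ hg
  filter_upwards [eventually_ge_atTop (1:ℝ)] with z hz
  have h0 := logNonneg z
  have hzpow : (0:ℝ) ≤ z ^ m := pow_nonneg (by linarith) m
  have he := (Real.exp_pos (-z/2)).le
  rw [norm_mul, norm_mul, norm_mul]
  simp only [norm_neg, Real.norm_eq_abs]
  rw [abs_of_nonneg he, abs_of_nonneg h0, abs_of_nonneg hzpow]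
  have hL : Real.log (1 + Real.exp z) ≤ 2 * z := by
    have := logLeTop (z := z) (by linarith)
    linarith
  have h2 : |(2:ℝ)| = 2 := by norm_num
  rw [h2]
  calc 2 * (Real.exp (-z/2) * (Real.log (1 + Real.exp z) * z ^ m))
      ≤ 2 * (Real.exp (-z/2) * (2 * z * z ^ m)) := by
        have : Real.log (1 + Real.exp z) * z ^ m ≤ 2 * z * z ^ m :=
          mul_le_mul_of_nonneg_right hL hzpow
        nlinarith [Real.exp_pos (-z/2)]
    _ = 4 * (z ^ (m+1) * Real.exp (-z/2)) := by ring

lemma tendstoBot (m : ℕ) :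
    Tendsto (fun z : ℝ => -2 * (Real.exp (-z / 2) * (Real.log (1 + Real.exp z) * z ^ m)))
      atBot (nhds 0) := by
  have hg : Tendsto (fun z : ℝ => 2 * ((-z) ^ m * Real.exp (-(-z) / 2))) atBot (nhds 0) := by
    have := ((powExpTendsto m).const_mul (2:ℝ)).comp tendsto_neg_atBot_atTop
    simpa [Function.comp_def] using this
  refine squeeze_zero_norm' ?_ hg
  filter_upwards [eventually_le_atBot (0:ℝ)] with z hz
  have h0 := logNonneg z
  have he := (Real.exp_pos (-z/2)).le
  rw [norm_mul, norm_mul, norm_mul]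
  simp only [norm_neg, Real.norm_eq_abs]
  rw [abs_of_nonneg he, abs_of_nonneg h0]
  have habs : |z ^ m| = (-z) ^ m := by
    rw [abs_pow, abs_of_nonpos hz]
  rw [habs]
  have hL : Real.log (1 + Real.exp z) ≤ Real.exp z := logLeExp z
  have hpow : (0:ℝ) ≤ (-z) ^ m := pow_nonneg (by linarith) m
  have hkey : Real.exp (-z/2) * Real.exp z = Real.exp (-(-z)/2) := by
    rw [← Real.exp_add]; ring_nf
  have h2 : |(2:ℝ)| = 2 := by norm_num
  rw [h2]
  calc 2 * (Real.exp (-z/2) * (Real.log (1 + Real.exp z) * (-z) ^ m))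
      ≤ 2 * (Real.exp (-z/2) * (Real.exp z * (-z) ^ m)) := by
        nlinarith [Real.exp_pos (-z/2), mul_le_mul_of_nonneg_right hL hpow]
    _ = 2 * ((-z) ^ m * Real.exp (-(-z)/2)) := by rw [← hkey]; ring

noncomputable def Fm (m : ℕ) : ℝ :=
  ∫ z : ℝ, Real.log (1 + Real.exp z) * z ^ m * Real.exp (-z / 2)

noncomputable def Gm (m : ℕ) : ℝ := ∫ z : ℝ, z ^ m / Real.cosh (z / 2)

lemma stepF (m : ℕ) : Fm m = Gm m + 2 * m * Fm (m - 1) := by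
  have hC : Integrable (fun z : ℝ =>
      2 * (m:ℝ) * (Real.log (1 + Real.exp z) * z ^ (m-1) * Real.exp (-z / 2))) :=
    (intF (m-1)).const_mul _
  have hint : Integrable (fun z : ℝ =>
      Real.log (1 + Real.exp z) * z ^ m * Real.exp (-z / 2) - z ^ m / Real.cosh (z / 2)
        - 2 * m * (Real.log (1 + Real.exp z) * z ^ (m - 1) * Real.exp (-z / 2))) :=
    ((intF m).sub (intG m)).sub hC
  have hFTC := integral_of_hasDerivAt_of_tendsto (derivStep m) hint (tendstoBot m) (tendstoTop m)
  rw [sub_zero] at hFTC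
  have e1 : (∫ z : ℝ, (Real.log (1 + Real.exp z) * z ^ m * Real.exp (-z / 2)
        - z ^ m / Real.cosh (z / 2)
        - 2 * m * (Real.log (1 + Real.exp z) * z ^ (m - 1) * Real.exp (-z / 2))))
      = (∫ z : ℝ, (Real.log (1 + Real.exp z) * z ^ m * Real.exp (-z / 2)
        - z ^ m / Real.cosh (z / 2)))
      - ∫ z : ℝ, 2 * m * (Real.log (1 + Real.exp z) * z ^ (m - 1) * Real.exp (-z / 2)) :=
    integral_sub ((intF m).sub (intG m)) hC
  have e2 : (∫ z : ℝ, (Real.log (1 + Real.exp z) * z ^ m * Real.exp (-z / 2)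
        - z ^ m / Real.cosh (z / 2)))
      = (∫ z : ℝ, Real.log (1 + Real.exp z) * z ^ m * Real.exp (-z / 2))
      - ∫ z : ℝ, z ^ m / Real.cosh (z / 2) := integral_sub (intF m) (intG m)
  have e3 : (∫ z : ℝ, 2 * (m:ℝ) * (Real.log (1 + Real.exp z) * z ^ (m-1) * Real.exp (-z / 2)))
      = 2 * (m:ℝ) * ∫ z : ℝ, Real.log (1 + Real.exp z) * z ^ (m-1) * Real.exp (-z / 2) :=
    integral_const_mul _ _
  rw [e1, e2, e3] at hFTC
  have : Fm m - Gm m - 2 * m * Fm (m-1) = 0 := hFTC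
  linarith

lemma oddG (j : ℕ) : Gm (2*j+1) = 0 := by
  have h : (∫ z : ℝ, (-z) ^ (2*j+1) / Real.cosh (-z / 2))
      = ∫ z : ℝ, z ^ (2*j+1) / Real.cosh (z / 2) :=
    integral_neg_eq_self (fun z : ℝ => z ^ (2*j+1) / Real.cosh (z / 2)) _
  have h2 : ∀ z : ℝ, (-z) ^ (2*j+1) / Real.cosh (-z / 2)
      = -(z ^ (2*j+1) / Real.cosh (z / 2)) := by
    intro z
    rw [Odd.neg_pow ⟨j, by ring⟩, show -z/2 = -(z/2) by ring, Real.cosh_neg, neg_div]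
  simp only [h2, integral_neg] at h
  have hG : Gm (2*j+1) = ∫ z : ℝ, z ^ (2*j+1) / Real.cosh (z / 2) := rfl
  rw [hG]
  linarith [h]

lemma sumF (n : ℕ) :
    Fm (2*n) = ∑ k ∈ Finset.range (n+1),
      (4:ℝ) ^ k * ((2*n).descFactorial (2*k) : ℝ) * Gm (2*(n-k)) := by
  induction n with
  | zero =>
    have h := stepF 0
    norm_num at h
    simpa using h
  | succ n ih =>
    have h1 : Fm (2*(n+1)) = Gm (2*(n+1)) + 2*(2*(n:ℝ)+2) * Fm (2*n+1) := by
      have := stepF (2*(n+1))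
      have he : 2*(n+1) - 1 = 2*n+1 := by omega
      rw [he] at this
      convert this using 2
      push_cast; ring
    have h2 : Fm (2*n+1) = 2*(2*(n:ℝ)+1) * Fm (2*n) := by
      have := stepF (2*n+1)
      have he : 2*n+1 - 1 = 2*n := by omega
      rw [he, oddG n] at this
      rw [this]
      push_cast; ring
    rw [Finset.sum_range_succ', h1, h2, ih, add_comm (Gm (2*(n+1)))]
    congr 1
    · rw [show (2*(2*(n:ℝ)+2)) * (2*(2*(n:ℝ)+1) * ∑ k ∈ Finset.range (n+1),
          (4:ℝ) ^ k * ((2*n).descFactorial (2*k) : ℝ) * Gm (2*(n-k)))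
        = ∑ k ∈ Finset.range (n+1), (2*(2*(n:ℝ)+2)) * (2*(2*(n:ℝ)+1) *
          ((4:ℝ) ^ k * ((2*n).descFactorial (2*k) : ℝ) * Gm (2*(n-k)))) from by
          rw [← Finset.mul_sum, ← Finset.mul_sum]]
      refine Finset.sum_congr rfl (fun k hk => ?_)
      have hd : (2*(n+1)).descFactorial (2*(k+1)) =
          (2*(n+1)) * ((2*n+1) * ((2*n).descFactorial (2*k))) := by
        have e1 : 2*(n+1) = (2*n+1) + 1 := by omega
        have e2 : 2*(k+1) = (2*k+1) + 1 := by omega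
        rw [e1, e2, Nat.succ_descFactorial_succ, Nat.succ_descFactorial_succ]
      have hsub : n + 1 - (k+1) = n - k := by omega
      rw [hsub, hd]
      push_cast
      ring
    · simp

lemma GmEq (j : ℕ) : Gm (2*j) = 2 ^ (2*j+1) * ∫ u : ℝ, u ^ (2*j) / Real.cosh u := by
  have h := Measure.integral_comp_mul_left (fun z : ℝ => z ^ (2*j) / Real.cosh (z / 2)) 2
  have h2 : ∀ x : ℝ, (2*x) ^ (2*j) / Real.cosh ((2*x) / 2)
      = 2 ^ (2*j) * (x ^ (2*j) / Real.cosh x) := by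
    intro x
    rw [mul_pow, show (2*x)/2 = x by ring]
    ring
  simp only [h2] at h
  rw [integral_const_mul] at h
  have h3 : 2 ^ (2*j) * (∫ u : ℝ, u ^ (2*j) / Real.cosh u) = |(2:ℝ)⁻¹| • Gm (2*j) := h
  rw [abs_of_pos (by norm_num : (0:ℝ) < 2⁻¹), smul_eq_mul] at h3
  rw [pow_succ]
  nlinarith [h3]

end Stmt8Aux

/-- `c_n(1) = (1/n!) Σ_{k=0}^{n} 2^{2k}·((2n)!/((2n−2k)!))·π^{2(n−k)}·|E_{2(n−k)}|`. -/
theorem stmt8 (n : ℕ) :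
    cCoef n 1 = (1 / (n.factorial : ℝ)) *
      ∑ k ∈ Finset.range (n + 1),
        (2 : ℝ) ^ (2 * k) * ((2 * n).descFactorial (2 * k) : ℝ)
          * Real.pi ^ (2 * (n - k)) * absEuler (n - k) := by
  have hpi : Real.pi ≠ 0 := Real.pi_ne_zero
  have hfac : (n.factorial : ℝ) ≠ 0 := Nat.cast_ne_zero.mpr n.factorial_ne_zero
  have hc : cCoef n 1 = (1 / (2 * Real.pi * n.factorial)) * Stmt8Aux.Fm (2*n) := by
    unfold cCoef Stmt8Aux.Fm
    simp only [one_mul]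
  rw [hc, Stmt8Aux.sumF n, Finset.mul_sum, Finset.mul_sum]
  refine Finset.sum_congr rfl (fun k hk => ?_)
  rw [Stmt8Aux.GmEq (n-k)]
  unfold absEuler
  rw [show (4:ℝ) = 2^2 from by norm_num, ← pow_mul]
  have hpow : ((Real.pi / 2) ^ (2 * (n-k) + 1)) ≠ 0 := by positivity
  field_simp
  ring_nf
  rw [mul_assoc _ ((1/2:ℝ) ^ _), ← mul_pow]
  norm_num
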